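/- Let a, l, c be positive integers and let A ∈ ℝ^{a×a}, B ∈ ℝ^{a×l}, C ∈ ℝ^{l×a}, D ∈ ℝ^{l×l}. Then there exist matrices Q′₀, Q′₁, …, Q′_l ∈ ℝ^{a×a}, depending only on A, B, C, D, such that for every choice of initial matrices X₀ ∈ ℝ^{c×a}, Z₀ ∈ ℝ^{c×l}, the sequences defined by X_{n+1} = X_n·A + Z_n·C and Z_{n+1} = X_n·B + Z_n·D satisfy X_{n+l+1} = Σ_{i=0}^{l} X_{n+i}·Q′_i for all n ≥ 0. That is, the right-acting (column) analogue of the Cayley–Hamilton elimination holds: the observed block satisfies a matrix-coefficient linear recurrence of order l+1 with coefficients acting on the right. -/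
import Mathlib

open Finset

/-- **Cayley–Hamilton elimination of the latent block (right-acting / column version).**
Given `A ∈ ℝ^{a×a}`, `B ∈ ℝ^{a×l}`, `C ∈ ℝ^{l×a}`, `D ∈ ℝ^{l×l}`, there exist matrices
`Q′₀, …, Q′_l ∈ ℝ^{a×a}`, depending only on `A, B, C, D`, such that for every pair of
sequences satisfying `X_{n+1} = X_n·A + Z_n·C`, `Z_{n+1} = X_n·B + Z_n·D` (with arbitrary
initial `X₀ ∈ ℝ^{c×a}`, `Z₀ ∈ ℝ^{c×l}`), the observed block satisfies the order-`(l+1)`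
recurrence `X_{n+l+1} = Σ_{i=0}^{l} X_{n+i}·Q′_i` for all `n ≥ 0`. -/
theorem latent_elimination_right (a l c : ℕ) (ha : 0 < a) (hl : 0 < l) (hc : 0 < c)
    (A : Matrix (Fin a) (Fin a) ℝ) (B : Matrix (Fin a) (Fin l) ℝ)
    (C : Matrix (Fin l) (Fin a) ℝ) (D : Matrix (Fin l) (Fin l) ℝ) :
    ∃ Q' : Fin (l + 1) → Matrix (Fin a) (Fin a) ℝ,
      ∀ (X : ℕ → Matrix (Fin c) (Fin a) ℝ) (Z : ℕ → Matrix (Fin c) (Fin l) ℝ),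
        (∀ n : ℕ, X (n + 1) = X n * A + Z n * C) →
        (∀ n : ℕ, Z (n + 1) = X n * B + Z n * D) →
        ∀ n : ℕ, X (n + l + 1) = ∑ i : Fin (l + 1), X (n + (i : ℕ)) * Q' i := by
  classical
  set p : ℕ → ℝ := fun k => (Matrix.charpoly D).coeff k with hp
  have hdeg : (Matrix.charpoly D).natDegree = l := by
    simp [Matrix.charpoly_natDegree_eq_dim]
  have hpl : p l = 1 := by
    have := (Matrix.charpoly_monic D).coeff_natDegree
    rwa [hdeg] at this
  have hCH : ∑ i ∈ Finset.range (l + 1), p i • D ^ i = 0 := by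
    have h := Matrix.aeval_self_charpoly D
    rw [Polynomial.aeval_eq_sum_range, hdeg] at h
    exact h
  -- the coefficient matrices
  refine ⟨fun i =>
      p (i : ℕ) • A -
        (if (i : ℕ) = 0 then 0 else p ((i : ℕ) - 1) • (1 : Matrix (Fin a) (Fin a) ℝ)) +
        B * (∑ k ∈ (Finset.range (l + 1)).filter (fun k => (i : ℕ) < k),
              p k • D ^ (k - 1 - (i : ℕ))) * C, ?_⟩
  intro X Z hX hZ n
  -- closed form for Z (m + k)
  have hZform : ∀ m k : ℕ,
      Z (m + k) = Z m * D ^ k + ∑ j ∈ Finset.range k, X (m + j) * B * D ^ (k - 1 - j) := by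
    intro m k
    induction k with
    | zero => simp
    | succ k ih =>
      have : m + (k + 1) = (m + k) + 1 := by ring
      rw [this, hZ (m + k), ih, Finset.sum_range_succ]
      have hstep : (∑ j ∈ Finset.range k, X (m + j) * B * D ^ (k - 1 - j)) * D =
          ∑ j ∈ Finset.range k, X (m + j) * B * D ^ (k + 1 - 1 - j) := by
        rw [Matrix.sum_mul]
        refine Finset.sum_congr rfl fun j hj => ?_
        have hjk : j < k := Finset.mem_range.mp hj
        have : k + 1 - 1 - j = (k - 1 - j) + 1 := by omega
        rw [this, pow_succ, Matrix.mul_assoc]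
      rw [Matrix.add_mul, Matrix.mul_assoc, ← pow_succ, hstep]
      have : k + 1 - 1 - k = 0 := by omega
      rw [this, pow_zero, Matrix.mul_one]
      abel
  -- apply Cayley–Hamilton to kill the latent part
  have hZcomb : ∑ i ∈ Finset.range (l + 1), p i • Z (n + i) =
      ∑ i ∈ Finset.range (l + 1), ∑ j ∈ Finset.range i,
        p i • (X (n + j) * B * D ^ (i - 1 - j)) := by
    calc ∑ i ∈ Finset.range (l + 1), p i • Z (n + i)
        = ∑ i ∈ Finset.range (l + 1),
            (Z n * (p i • D ^ i) +
              ∑ j ∈ Finset.range i, p i • (X (n + j) * B * D ^ (i - 1 - j))) := by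
          refine Finset.sum_congr rfl fun i hi => ?_
          rw [hZform n i, smul_add, Finset.smul_sum, Matrix.mul_smul]
      _ = Z n * (∑ i ∈ Finset.range (l + 1), p i • D ^ i) +
            ∑ i ∈ Finset.range (l + 1), ∑ j ∈ Finset.range i,
              p i • (X (n + j) * B * D ^ (i - 1 - j)) := by
          rw [Finset.sum_add_distrib, Matrix.mul_sum]
      _ = _ := by rw [hCH, Matrix.mul_zero, zero_add]
  -- the basic recurrence combined
  have hXcomb : ∑ i ∈ Finset.range (l + 1), p i • X (n + i + 1) =
      (∑ i ∈ Finset.range (l + 1), p i • X (n + i)) * A +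
        (∑ i ∈ Finset.range (l + 1), p i • Z (n + i)) * C := by
    rw [Matrix.sum_mul, Matrix.sum_mul, ← Finset.sum_add_distrib]
    refine Finset.sum_congr rfl fun i hi => ?_
    rw [hX (n + i), smul_add, Matrix.smul_mul, Matrix.smul_mul]
  have hkey : X (n + l + 1) =
      (∑ i ∈ Finset.range (l + 1), p i • X (n + i)) * A +
        (∑ i ∈ Finset.range (l + 1), ∑ j ∈ Finset.range i,
          p i • (X (n + j) * B * D ^ (i - 1 - j))) * C -
        ∑ i ∈ Finset.range l, p i • X (n + i + 1) := by
    have h1 : ∑ i ∈ Finset.range (l + 1), p i • X (n + i + 1) =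
        (∑ i ∈ Finset.range l, p i • X (n + i + 1)) + X (n + l + 1) := by
      rw [Finset.sum_range_succ, hpl, one_smul]
    rw [← hZcomb, ← hXcomb, h1]
    abel
  -- triangular sum swap
  have hswap : (∑ i ∈ Finset.range (l + 1), ∑ j ∈ Finset.range i,
        p i • (X (n + j) * B * D ^ (i - 1 - j))) * C =
      ∑ j ∈ Finset.range (l + 1), ∑ k ∈ (Finset.range (l + 1)).filter (fun k => j < k),
        p k • (X (n + j) * B * D ^ (k - 1 - j) * C) := by
    rw [Matrix.sum_mul]
    have step : ∀ i ∈ Finset.range (l + 1),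
        (∑ j ∈ Finset.range i, p i • (X (n + j) * B * D ^ (i - 1 - j))) * C =
        ∑ j ∈ Finset.range (l + 1),
          if j < i then p i • (X (n + j) * B * D ^ (i - 1 - j) * C) else 0 := by
      intro i hi
      have hi' : i ≤ l + 1 := le_of_lt (Finset.mem_range.mp hi)
      rw [Matrix.sum_mul, ← Finset.sum_filter]
      have hfe : (Finset.range (l + 1)).filter (fun j => j < i) = Finset.range i := by
        ext j
        simp only [Finset.mem_filter, Finset.mem_range]
        omega
      rw [hfe]
      refine Finset.sum_congr rfl fun j hj => ?_
      rw [Matrix.smul_mul]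
    rw [Finset.sum_congr rfl step, Finset.sum_comm]
    refine Finset.sum_congr rfl fun j hj => ?_
    rw [Finset.sum_filter]
  -- now assemble
  rw [Fin.sum_univ_eq_sum_range
    (fun i => X (n + i) *
      (p i • A - (if i = 0 then 0 else p (i - 1) • (1 : Matrix (Fin a) (Fin a) ℝ)) +
        B * (∑ k ∈ (Finset.range (l + 1)).filter (fun k => i < k),
          p k • D ^ (k - 1 - i)) * C))]
  have expand : ∀ i ∈ Finset.range (l + 1),
      X (n + i) *
        (p i • A - (if i = 0 then 0 else p (i - 1) • (1 : Matrix (Fin a) (Fin a) ℝ)) +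
          B * (∑ k ∈ (Finset.range (l + 1)).filter (fun k => i < k),
            p k • D ^ (k - 1 - i)) * C) =
      p i • (X (n + i) * A) -
        (if i = 0 then 0 else p (i - 1) • X (n + i)) +
        ∑ k ∈ (Finset.range (l + 1)).filter (fun k => i < k),
          p k • (X (n + i) * B * D ^ (k - 1 - i) * C) := by
    intro i hi
    rw [Matrix.mul_add, Matrix.mul_sub, Matrix.mul_smul]
    congr 1
    · congr 1
      split
      · rw [Matrix.mul_zero]
      · rw [Matrix.mul_smul, Matrix.mul_one]
    · rw [Matrix.mul_sum, Matrix.sum_mul, Matrix.mul_sum]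
      refine Finset.sum_congr rfl fun k hk => ?_
      rw [Matrix.mul_smul, Matrix.smul_mul, Matrix.mul_smul, ← Matrix.mul_assoc,
        ← Matrix.mul_assoc]
  rw [Finset.sum_congr rfl expand]
  rw [Finset.sum_add_distrib, Finset.sum_sub_distrib]
  have h2 : ∑ i ∈ Finset.range (l + 1),
      (if i = 0 then (0 : Matrix (Fin c) (Fin a) ℝ) else p (i - 1) • X (n + i)) =
      ∑ i ∈ Finset.range l, p i • X (n + i + 1) := by
    rw [Finset.sum_range_succ']
    simp [add_assoc]
  have h3 : ∑ i ∈ Finset.range (l + 1), p i • (X (n + i) * A) =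
      (∑ i ∈ Finset.range (l + 1), p i • X (n + i)) * A := by
    rw [Matrix.sum_mul]
    exact Finset.sum_congr rfl fun i hi => (Matrix.smul_mul _ _ _).symm
  rw [h2, h3, ← hswap, hkey]
  abel
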